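/- Let P be a partition of N with associated p ∈ Δ_N. If every block A ∈ P with |A| > 1 and every i ∈ A satisfy w(A) ≥ w({i}) + w(A∖{i}), then p is a local maximizer of W, i.e., W(p) ≥ W(q_i | p_{−i}) for every i ∈ N and every q_i ∈ Δ_i. -/

import Mathlib

open Finset

/-- Möbius inversion of a set function `w : 2^N → ℝ`:
`μ^w(A) = ∑_{B ⊆ A} (−1)^{|A∖B|} w(B)`. -/
def mobius {n : ℕ} (w : Finset (Fin n) → ℝ) (A : Finset (Fin n)) : ℝ :=
  ∑ B ∈ A.powerset, (-1 : ℝ) ^ (A.card - B.card) * w B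

/-- `qi` is a membership distribution for element `i`: nonnegative, supported on
the subsets containing `i`, and summing to `1` over them. -/
def coordDist {n : ℕ} (i : Fin n) (qi : Finset (Fin n) → ℝ) : Prop :=
  (∀ A, 0 ≤ qi A) ∧ (∀ A, i ∉ A → qi A = 0) ∧
    ∑ A ∈ Finset.univ.filter (fun A => i ∈ A), qi A = 1

/-- A fuzzy cover `q ∈ Δ_N`. -/
def fuzzyCover {n : ℕ} (q : Fin n → Finset (Fin n) → ℝ) : Prop :=
  ∀ i, coordDist i (q i)

/-- Global worth `W(q) = ∑_{A⊆N} ∑_{B⊆A} (∏_{i∈B} q_i^A) μ^w(B)`. -/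
def W {n : ℕ} (w : Finset (Fin n) → ℝ) (q : Fin n → Finset (Fin n) → ℝ) : ℝ :=
  ∑ A : Finset (Fin n), ∑ B ∈ A.powerset, (∏ i ∈ B, q i A) * mobius w B


/-- The point of `Δ_N` associated to a partition `P` of `N`:
`p_i^A = 1` iff `A` is the block of `P` containing `i`. -/
def partPoint {n : ℕ} (P : Finpartition (Finset.univ : Finset (Fin n))) :
    Fin n → Finset (Fin n) → ℝ :=
  fun i A => if A ∈ P.parts ∧ i ∈ A then 1 else 0

lemma neg_one_pow_sum {α : Type*} [DecidableEq α] (x : Finset α) :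
    (∑ m ∈ x.powerset, (-1 : ℝ) ^ m.card) = if x = ∅ then 1 else 0 := by
  have h := Finset.sum_powerset_neg_one_pow_card (x := x)
  have : ((∑ m ∈ x.powerset, (-1 : ℤ) ^ m.card : ℤ) : ℝ)
      = ∑ m ∈ x.powerset, (-1 : ℝ) ^ m.card := by push_cast; ring
  rw [← this, h]
  split <;> norm_num

lemma sum_mobius {n : ℕ} (w : Finset (Fin n) → ℝ) (A : Finset (Fin n)) :
    ∑ B ∈ A.powerset, mobius w B = w A := by
  unfold mobius
  rw [Finset.sum_comm' (t' := A.powerset)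
      (s' := fun C => A.powerset.filter (fun B => C ⊆ B))
      (by
        intro B C
        simp only [mem_powerset, mem_filter]
        constructor
        · rintro ⟨h1, h2⟩; exact ⟨⟨h1, h2⟩, h2.trans h1⟩
        · rintro ⟨⟨h1, h2⟩, _⟩; exact ⟨h1, h2⟩)]
  have key : ∀ C ∈ A.powerset,
      (∑ B ∈ A.powerset.filter (fun B => C ⊆ B), (-1 : ℝ) ^ (B.card - C.card) * w C)
        = (if C = A then 1 else 0) * w C := by
    intro C hC
    rw [mem_powerset] at hC
    rw [← Finset.sum_mul]
    congr 1
    have : (∑ B ∈ A.powerset.filter (fun B => C ⊆ B), (-1 : ℝ) ^ (B.card - C.card))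
        = ∑ D ∈ (A \ C).powerset, (-1 : ℝ) ^ D.card := by
      apply Finset.sum_nbij' (i := fun B => B \ C) (j := fun D => C ∪ D)
      · intro B hB
        rw [mem_filter, mem_powerset] at hB
        rw [mem_powerset]
        exact sdiff_subset_sdiff hB.1 le_rfl
      · intro D hD
        rw [mem_powerset] at hD
        rw [mem_filter, mem_powerset]
        exact ⟨union_subset hC (hD.trans sdiff_subset), subset_union_left⟩
      · intro B hB
        rw [mem_filter, mem_powerset] at hB
        exact union_sdiff_of_subset hB.2
      · intro D hD
        rw [mem_powerset] at hD
        exact union_sdiff_cancel_left (disjoint_of_subset_right hD sdiff_disjoint.symm)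
      · intro B hB
        rw [mem_filter, mem_powerset] at hB
        rw [card_sdiff_of_subset hB.2]
    rw [this, neg_one_pow_sum]
    by_cases hCA : C = A
    · subst hCA; simp
    · rw [if_neg hCA, if_neg]
      rw [sdiff_eq_empty_iff_subset]
      exact fun hsub => hCA (le_antisymm hC hsub)
  rw [Finset.sum_congr rfl key]
  simp [ite_mul, mem_powerset]

lemma mobius_empty {n : ℕ} (w : Finset (Fin n) → ℝ) : mobius w ∅ = w ∅ := by
  simp [mobius]

lemma sum_mobius_insert {n : ℕ} (w : Finset (Fin n) → ℝ) {a : Fin n} {s : Finset (Fin n)}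
    (ha : a ∉ s) : ∑ B ∈ s.powerset, mobius w (insert a B) = w (insert a s) - w s := by
  have h := sum_mobius w (insert a s)
  rw [Finset.sum_powerset_insert ha, sum_mobius] at h
  linarith

lemma mobius_singleton {n : ℕ} (w : Finset (Fin n) → ℝ) (i : Fin n) :
    mobius w {i} = w {i} - w ∅ := by
  have h := sum_mobius_insert w (s := ∅) (a := i) (by simp)
  simpa [mobius_empty] using h

lemma sum_powerset_ite_empty {α : Type*} [DecidableEq α] (s : Finset α) (f : Finset α → ℝ) :
    ∑ B ∈ s.powerset, (if B = ∅ then f B else 0) = f ∅ := by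
  rw [Finset.sum_eq_single ∅]
  · simp
  · intro B _ hB0; rw [if_neg hB0]
  · intro hc; exact absurd (Finset.empty_mem_powerset _) hc

lemma W_update {n : ℕ} (w : Finset (Fin n) → ℝ) (hw : w ∅ = 0)
    (P : Finpartition (Finset.univ : Finset (Fin n))) (i : Fin n)
    (qi : Finset (Fin n) → ℝ)
    (Ai : Finset (Fin n)) (hAi : Ai ∈ P.parts) (hiAi : i ∈ Ai) :
    W w (Function.update (partPoint P) i qi)
      = ((∑ A ∈ P.parts, w A) - w Ai) + (w (Ai.erase i) + qi Ai * (w Ai - w (Ai.erase i)))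
        + (∑ A ∈ (Finset.univ.filter (fun A => i ∈ A)).erase Ai, qi A) * w {i} := by
  set q := Function.update (partPoint P) i qi with hqdef
  have hqi : ∀ A, q i A = qi A := fun A => by simp [hqdef]
  have hqj : ∀ j A, j ≠ i → q j A = partPoint P j A := fun j A hj => by
    simp [hqdef, Function.update_of_ne hj]
  -- per-A inner sums
  have key : ∀ A : Finset (Fin n),
      (∑ B ∈ A.powerset, (∏ j ∈ B, q j A) * mobius w B)
        = if i ∈ A then
            (if A ∈ P.parts then w (A.erase i) + qi A * (w A - w (A.erase i))
             else qi A * w {i})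
          else (if A ∈ P.parts then w A else 0) := by
    intro A
    by_cases hiA : i ∈ A
    · rw [if_pos hiA]
      have hde : insert i (A.erase i) = A := insert_erase hiA
      have hie : i ∉ A.erase i := notMem_erase i A
      by_cases hP : A ∈ P.parts
      · rw [if_pos hP]
        conv_lhs => rw [← hde]
        rw [Finset.sum_powerset_insert hie]
        have hprod : ∀ B ∈ (A.erase i).powerset, (∏ j ∈ B, q j (insert i (A.erase i))) = 1 := by
          intro B hB
          rw [mem_powerset] at hB
          apply Finset.prod_eq_one
          intro j hj
          have hji : j ≠ i := ne_of_mem_erase (hB hj)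
          rw [hqj j _ hji, hde]
          have : A ∈ P.parts ∧ j ∈ A := ⟨hP, (erase_subset i A) (hB hj)⟩
          simp [partPoint, this]
        have h1 : (∑ B ∈ (A.erase i).powerset, (∏ j ∈ B, q j (insert i (A.erase i))) * mobius w B)
            = w (A.erase i) := by
          rw [Finset.sum_congr rfl (fun B hB => by rw [hprod B hB, one_mul]), sum_mobius]
        have h2 : (∑ B ∈ (A.erase i).powerset,
              (∏ j ∈ insert i B, q j (insert i (A.erase i))) * mobius w (insert i B))
            = qi A * (w A - w (A.erase i)) := by
          have : ∀ B ∈ (A.erase i).powerset,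
              (∏ j ∈ insert i B, q j (insert i (A.erase i))) * mobius w (insert i B)
                = qi A * mobius w (insert i B) := by
            intro B hB
            have hiB : i ∉ B := fun hc => hie (mem_powerset.mp hB hc)
            rw [Finset.prod_insert hiB, hprod B hB, mul_one, hqi, hde]
          rw [Finset.sum_congr rfl this, ← Finset.mul_sum, sum_mobius_insert w hie, hde]
        rw [h1, h2]
      · rw [if_neg hP]
        conv_lhs => rw [← hde]
        rw [Finset.sum_powerset_insert hie]
        have hprod : ∀ B ∈ (A.erase i).powerset, (∏ j ∈ B, q j (insert i (A.erase i)))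
            = if B = ∅ then 1 else 0 := by
          intro B hB
          rw [mem_powerset] at hB
          by_cases hB0 : B = ∅
          · simp [hB0]
          · rw [if_neg hB0]
            obtain ⟨j, hj⟩ := Finset.nonempty_iff_ne_empty.2 hB0
            apply Finset.prod_eq_zero hj
            have hji : j ≠ i := ne_of_mem_erase (hB hj)
            rw [hqj j _ hji, hde]
            simp [partPoint, hP]
        have h1 : (∑ B ∈ (A.erase i).powerset, (∏ j ∈ B, q j (insert i (A.erase i))) * mobius w B)
            = 0 := by
          have hstep1 : ∀ B ∈ (A.erase i).powerset,
              (∏ j ∈ B, q j (insert i (A.erase i))) * mobius w B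
                = if B = ∅ then mobius w B else 0 := by
            intro B hB
            rw [hprod B hB]
            by_cases hB0 : B = ∅ <;> simp [hB0]
          rw [Finset.sum_congr rfl hstep1, sum_powerset_ite_empty, mobius_empty, hw]
        have h2 : (∑ B ∈ (A.erase i).powerset,
              (∏ j ∈ insert i B, q j (insert i (A.erase i))) * mobius w (insert i B))
            = qi A * w {i} := by
          have hstep : ∀ B ∈ (A.erase i).powerset,
              (∏ j ∈ insert i B, q j (insert i (A.erase i))) * mobius w (insert i B)
                = if B = ∅ then qi A * mobius w {i} else 0 := by
            intro B hB
            have hiB : i ∉ B := fun hc => hie (mem_powerset.mp hB hc)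
            rw [Finset.prod_insert hiB, hprod B hB, hqi, hde]
            by_cases hB0 : B = ∅
            · simp [hB0]
            · simp [hB0]
          rw [Finset.sum_congr rfl hstep,
            sum_powerset_ite_empty ((A.erase i)) (fun _ => qi A * mobius w {i}),
            mobius_singleton, hw, sub_zero]
        rw [h1, h2, zero_add]
    · rw [if_neg hiA]
      have hprod : ∀ B ∈ A.powerset, (∏ j ∈ B, q j A)
          = if A ∈ P.parts then 1 else if B = ∅ then 1 else 0 := by
        intro B hB
        rw [mem_powerset] at hB
        by_cases hP : A ∈ P.parts
        · rw [if_pos hP]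
          apply Finset.prod_eq_one
          intro j hj
          have hji : j ≠ i := fun hc => hiA (hc ▸ hB hj)
          rw [hqj j _ hji]
          have : A ∈ P.parts ∧ j ∈ A := ⟨hP, hB hj⟩
          simp [partPoint, this]
        · rw [if_neg hP]
          by_cases hB0 : B = ∅
          · simp [hB0]
          · rw [if_neg hB0]
            obtain ⟨j, hj⟩ := Finset.nonempty_iff_ne_empty.2 hB0
            apply Finset.prod_eq_zero hj
            have hji : j ≠ i := fun hc => hiA (hc ▸ hB hj)
            rw [hqj j _ hji]
            simp [partPoint, hP]
      by_cases hP : A ∈ P.parts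
      · rw [if_pos hP]
        rw [Finset.sum_congr rfl (fun B hB => by rw [hprod B hB, if_pos hP, one_mul]), sum_mobius]
      · rw [if_neg hP]
        have hstep1 : ∀ B ∈ A.powerset, (∏ j ∈ B, q j A) * mobius w B
            = if B = ∅ then mobius w B else 0 := by
          intro B hB
          rw [hprod B hB, if_neg hP]
          by_cases hB0 : B = ∅ <;> simp [hB0]
        rw [Finset.sum_congr rfl hstep1, sum_powerset_ite_empty, mobius_empty, hw]
  -- now sum over A
  rw [W, Finset.sum_congr rfl (fun A _ => key A)]
  rw [← Finset.sum_filter_add_sum_filter_not Finset.univ (fun A => i ∈ A)]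
  have hsplit1 : (∑ A ∈ Finset.univ.filter (fun A => i ∈ A),
      if i ∈ A then
        (if A ∈ P.parts then w (A.erase i) + qi A * (w A - w (A.erase i)) else qi A * w {i})
      else (if A ∈ P.parts then w A else 0))
    = (w (Ai.erase i) + qi Ai * (w Ai - w (Ai.erase i)))
      + (∑ A ∈ (Finset.univ.filter (fun A => i ∈ A)).erase Ai, qi A) * w {i} := by
    have hAimem : Ai ∈ Finset.univ.filter (fun A => i ∈ A) := by simp [hiAi]
    rw [← Finset.add_sum_erase _ _ hAimem]
    congr 1
    · rw [if_pos hiAi, if_pos hAi]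
    · rw [Finset.sum_mul]
      apply Finset.sum_congr rfl
      intro A hA
      rw [mem_erase, mem_filter] at hA
      have hiA : i ∈ A := hA.2.2
      have hnP : A ∉ P.parts := fun hc => hA.1 (P.eq_of_mem_parts hc hAi hiA hiAi)
      rw [if_pos hiA, if_neg hnP]
  have hsplit2 : (∑ A ∈ Finset.univ.filter (fun A => ¬ i ∈ A),
      if i ∈ A then
        (if A ∈ P.parts then w (A.erase i) + qi A * (w A - w (A.erase i)) else qi A * w {i})
      else (if A ∈ P.parts then w A else 0))
    = (∑ A ∈ P.parts, w A) - w Ai := by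
    have step : ∀ A ∈ Finset.univ.filter (fun A => ¬ i ∈ A),
        (if i ∈ A then
          (if A ∈ P.parts then w (A.erase i) + qi A * (w A - w (A.erase i)) else qi A * w {i})
        else (if A ∈ P.parts then w A else 0)) = if A ∈ P.parts then w A else 0 := by
      intro A hA
      rw [mem_filter] at hA
      rw [if_neg hA.2]
    rw [Finset.sum_congr rfl step, ← Finset.sum_filter]
    have hset : (Finset.univ.filter (fun A => ¬ i ∈ A)).filter (fun A => A ∈ P.parts)
        = P.parts.erase Ai := by
      ext A
      simp only [mem_filter, mem_erase, mem_univ, true_and]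
      constructor
      · rintro ⟨hni, hpa⟩
        exact ⟨fun hc => hni (hc ▸ hiAi), hpa⟩
      · rintro ⟨hne, hpa⟩
        exact ⟨fun hc => hne (P.eq_of_mem_parts hpa hAi hc hiAi), hpa⟩
    rw [hset, Finset.sum_erase_eq_sub hAi]
  rw [hsplit1, hsplit2]
  ring

/-- if every block `A ∈ P` with `|A| > 1` and every `i ∈ A` satisfy
`w(A) ≥ w({i}) + w(A∖{i})`, then the point `p` associated to `P` is a local
maximizer of `W`. -/
theorem partition_local_maximizer {n : ℕ} (w : Finset (Fin n) → ℝ) (hw : w ∅ = 0)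
    (P : Finpartition (Finset.univ : Finset (Fin n)))
    (h : ∀ A ∈ P.parts, 1 < A.card → ∀ i ∈ A, w {i} + w (A.erase i) ≤ w A) :
    ∀ i : Fin n, ∀ qi : Finset (Fin n) → ℝ, coordDist i qi →
      W w (Function.update (partPoint P) i qi) ≤ W w (partPoint P) := by
  intro i qi hqi
  obtain ⟨Ai, hAi, hiAi⟩ := P.exists_mem (mem_univ i)
  have hp : W w (partPoint P) = ∑ A ∈ P.parts, w A := by
    have hupd : partPoint P = Function.update (partPoint P) i (partPoint P i) :=
      (Function.update_eq_self i (partPoint P)).symm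
    rw [hupd, W_update w hw P i _ Ai hAi hiAi]
    have h1 : partPoint P i Ai = 1 := by simp [partPoint, hAi, hiAi]
    have h2 : ∑ A ∈ (Finset.univ.filter (fun A => i ∈ A)).erase Ai, partPoint P i A = 0 := by
      apply Finset.sum_eq_zero
      intro A hA
      rw [mem_erase, mem_filter] at hA
      have : A ∉ P.parts := fun hc => hA.1 (P.eq_of_mem_parts hc hAi hA.2.2 hiAi)
      simp [partPoint, this]
    rw [h1, h2]; ring
  rw [hp, W_update w hw P i qi Ai hAi hiAi]
  obtain ⟨hnn, hsupp, hsum⟩ := hqi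
  set S := ∑ A ∈ (Finset.univ.filter (fun A => i ∈ A)).erase Ai, qi A with hS
  have hSnn : 0 ≤ S := Finset.sum_nonneg fun A _ => hnn A
  have hqiAi : qi Ai = 1 - S := by
    have hmem : Ai ∈ Finset.univ.filter (fun A => i ∈ A) := by simp [hiAi]
    rw [← Finset.add_sum_erase _ _ hmem] at hsum
    linarith [hsum]
  by_cases hcard : 1 < Ai.card
  · have hh := h Ai hAi hcard i hiAi
    rw [hqiAi]
    nlinarith [mul_nonneg hSnn (by linarith : (0:ℝ) ≤ w Ai - w (Ai.erase i) - w {i})]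
  · have h1 : Ai.card = 1 := le_antisymm (not_lt.mp hcard) (Finset.card_pos.mpr ⟨i, hiAi⟩)
    obtain ⟨a, ha⟩ := Finset.card_eq_one.mp h1
    have hai : Ai = {i} := by
      rw [ha] at hiAi ⊢
      rw [Finset.mem_singleton] at hiAi
      rw [hiAi]
    rw [hai] at hqiAi ⊢
    rw [Finset.erase_singleton, hw, hqiAi]
    ring_nf
    exact le_refl _
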